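/- For every positive integer n, |γ_Zg(P_n) − n/2| ≤ 2, where P_n denotes the path graph on n vertices. -/

import Mathlib

/- Formalization of the domination games from "The variety of domination games".

A game is specified by a legality predicate `legal : List V → V → Prop`, where the list
records the previously played vertices (most recent first).  Players alternate moves;
each move must be legal; the game ends when no legal move exists.  Dominator wants to
minimize, Staller to maximize, the total number of moves.

`canEnd legal k turn h` states that, with history `h` and the player to move given by
`turn` (`true` = Dominator), Dominator can guarantee that at most `k` further moves are
played (against any play of Staller).  The value of the game under optimal play by both
players is then the least such `k` from the empty history. -/

/-- The closed neighborhood `N[v]` of a vertex. -/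
def closedNbhd {V : Type*} (G : SimpleGraph V) (v : V) : Set V :=
  insert v (G.neighborSet v)

/-- `⋃_{u ∈ h} N[u]` : the set of vertices dominated by the moves in `h`. -/
def dominatedBy {V : Type*} (G : SimpleGraph V) (h : List V) : Set V :=
  ⋃ u ∈ h, closedNbhd G u

/-- `⋃_{u ∈ h} N(u)` : the set of vertices totally dominated by the moves in `h`. -/
def totDominatedBy {V : Type*} (G : SimpleGraph V) (h : List V) : Set V :=
  ⋃ u ∈ h, G.neighborSet u

/-- Legality in the domination game: `N[v] \ ⋃_{j<i} N[v_j] ≠ ∅`. -/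
def dgLegal {V : Type*} (G : SimpleGraph V) (h : List V) (v : V) : Prop :=
  (closedNbhd G v \ dominatedBy G h).Nonempty

/-- Legality in the total domination game: `N(v) \ ⋃_{j<i} N(v_j) ≠ ∅`. -/
def tgLegal {V : Type*} (G : SimpleGraph V) (h : List V) (v : V) : Prop :=
  (G.neighborSet v \ totDominatedBy G h).Nonempty

/-- Legality in the Z-domination game on `G|A`: `N(v) \ (A ∪ ⋃_{j<i} N[v_j]) ≠ ∅`. -/
def zLegal {V : Type*} (G : SimpleGraph V) (A : Set V) (h : List V) (v : V) : Prop :=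
  (G.neighborSet v \ (A ∪ dominatedBy G h)).Nonempty

/-- Legality in the LL-domination game on `G|A`: `N[v] \ (A ∪ ⋃_{j<i} N(v_j)) ≠ ∅`. -/
def llLegal {V : Type*} (G : SimpleGraph V) (A : Set V) (h : List V) (v : V) : Prop :=
  (closedNbhd G v \ (A ∪ totDominatedBy G h)).Nonempty

/-- Legality in the L-domination game on `G|A`: as in the LL-game, and moreover no vertex
may be played twice. -/
def lLegal {V : Type*} (G : SimpleGraph V) (A : Set V) (h : List V) (v : V) : Prop :=
  llLegal G A h v ∧ v ∉ h

/-- `canEnd legal k turn h` : with previously played vertices `h` and the player to move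
given by `turn` (`true` = Dominator, `false` = Staller), Dominator has a strategy
guaranteeing that at most `k` further moves are made. -/
def canEnd {V : Type*} (legal : List V → V → Prop) : ℕ → Bool → List V → Prop
  | 0, _, h => ∀ v, ¬ legal h v
  | k+1, true, h => (∀ v, ¬ legal h v) ∨ ∃ v, legal h v ∧ canEnd legal k false (v :: h)
  | k+1, false, h => ∀ v, legal h v → canEnd legal k true (v :: h)

/-- The number of moves in the game with legality predicate `legal` when both players play
optimally (Dominator minimizing, Staller maximizing the number of moves); `dFirst = true`
means Dominator makes the first move. -/
noncomputable def gameVal {V : Type*} (legal : List V → V → Prop) (dFirst : Bool) : ℕ :=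
  sInf {k | canEnd legal k dFirst []}

/-- The game Z-domination number `γ_Zg(G|A)` (Dominator starts). -/
noncomputable def gammaZgA {V : Type*} (G : SimpleGraph V) (A : Set V) : ℕ :=
  gameVal (zLegal G A) true

/-- The Staller-start game Z-domination number `γ'_Zg(G|A)`. -/
noncomputable def gammaZgA' {V : Type*} (G : SimpleGraph V) (A : Set V) : ℕ :=
  gameVal (zLegal G A) false

/-- The game L-domination number `γ_Lg(G|A)` (Dominator starts). -/
noncomputable def gammaLgA {V : Type*} (G : SimpleGraph V) (A : Set V) : ℕ :=
  gameVal (lLegal G A) true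

/-- The Staller-start game L-domination number `γ'_Lg(G|A)`. -/
noncomputable def gammaLgA' {V : Type*} (G : SimpleGraph V) (A : Set V) : ℕ :=
  gameVal (lLegal G A) false

/-- The game LL-domination number `γ_LLg(G|A)` (Dominator starts). -/
noncomputable def gammaLLgA {V : Type*} (G : SimpleGraph V) (A : Set V) : ℕ :=
  gameVal (llLegal G A) true

/-- The Staller-start game LL-domination number `γ'_LLg(G|A)`. -/
noncomputable def gammaLLgA' {V : Type*} (G : SimpleGraph V) (A : Set V) : ℕ :=
  gameVal (llLegal G A) false

/-- The game domination number `γ_g(G)` (Dominator starts). -/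
noncomputable def gammaG {V : Type*} (G : SimpleGraph V) : ℕ :=
  gameVal (dgLegal G) true

/-- The game total domination number `γ_tg(G)` (Dominator starts). -/
noncomputable def gammaTg {V : Type*} (G : SimpleGraph V) : ℕ :=
  gameVal (tgLegal G) true

/-- The game Z-domination number `γ_Zg(G)` (Dominator starts). -/
noncomputable def gammaZg {V : Type*} (G : SimpleGraph V) : ℕ := gammaZgA G ∅

/-- The Staller-start game Z-domination number `γ'_Zg(G)`. -/
noncomputable def gammaZg' {V : Type*} (G : SimpleGraph V) : ℕ := gammaZgA' G ∅

/-- The game L-domination number `γ_Lg(G)` (Dominator starts). -/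
noncomputable def gammaLg {V : Type*} (G : SimpleGraph V) : ℕ := gammaLgA G ∅

/-- The Staller-start game L-domination number `γ'_Lg(G)`. -/
noncomputable def gammaLg' {V : Type*} (G : SimpleGraph V) : ℕ := gammaLgA' G ∅

/-- The game LL-domination number `γ_LLg(G)` (Dominator starts). -/
noncomputable def gammaLLg {V : Type*} (G : SimpleGraph V) : ℕ := gammaLLgA G ∅

/-- The Staller-start game LL-domination number `γ'_LLg(G)`. -/
noncomputable def gammaLLg' {V : Type*} (G : SimpleGraph V) : ℕ := gammaLLgA' G ∅

/-- `G` has no isolated vertices. -/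
def isolateFree {V : Type*} (G : SimpleGraph V) : Prop := ∀ v : V, ∃ u, G.Adj v u

/-- The domination number `γ(G)`. -/
noncomputable def domNum {V : Type*} (G : SimpleGraph V) : ℕ :=
  sInf {k | ∃ S : Finset V, S.card = k ∧ ∀ v : V, ∃ u ∈ S, v ∈ closedNbhd G u}

/-- The total domination number `γ_t(G)`. -/
noncomputable def totDomNum {V : Type*} (G : SimpleGraph V) : ℕ :=
  sInf {k | ∃ S : Finset V, S.card = k ∧ ∀ v : V, ∃ u ∈ S, G.Adj u v}

namespace ZPath

open SimpleGraph Finset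

variable {n : ℕ}

/-- adjacency in the path as a decidable predicate on values -/
abbrev adjP (v j : Fin n) : Prop := v.val + 1 = j.val ∨ j.val + 1 = v.val

lemma adjP_iff (v j : Fin n) : (SimpleGraph.pathGraph n).Adj v j ↔ adjP v j :=
  SimpleGraph.pathGraph_adj

/-- closed neighborhood as a Finset -/
def nbF (v : Fin n) : Finset (Fin n) :=
  Finset.univ.filter (fun j => j = v ∨ adjP v j)

/-- dominated set as a Finset -/
def domF (h : List (Fin n)) : Finset (Fin n) :=
  Finset.univ.filter (fun j => ∃ p ∈ h, j = p ∨ adjP p j)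

lemma mem_domF {h : List (Fin n)} {j : Fin n} :
    j ∈ domF h ↔ ∃ p ∈ h, j = p ∨ adjP p j := by
  simp [domF]

lemma mem_nbF {v j : Fin n} : j ∈ nbF v ↔ j = v ∨ adjP v j := by
  simp [nbF]

lemma domF_eq (h : List (Fin n)) (j : Fin n) :
    j ∈ dominatedBy (SimpleGraph.pathGraph n) h ↔ j ∈ domF h := by
  simp only [dominatedBy, closedNbhd, Set.mem_iUnion, Set.mem_insert_iff,
    SimpleGraph.mem_neighborSet, SimpleGraph.pathGraph_adj, mem_domF, adjP, exists_prop]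

lemma zLegal_iff (h : List (Fin n)) (v : Fin n) :
    zLegal (SimpleGraph.pathGraph n) ∅ h v ↔ ∃ j, adjP v j ∧ j ∉ domF h := by
  simp only [zLegal, Set.Nonempty, Set.mem_diff, Set.mem_union, Set.mem_empty_iff_false,
    false_or, SimpleGraph.mem_neighborSet]
  constructor
  · rintro ⟨j, hj1, hj2⟩
    exact ⟨j, (adjP_iff v j).1 hj1, fun hc => hj2 ((domF_eq h j).2 hc)⟩
  · rintro ⟨j, hj1, hj2⟩
    exact ⟨j, (adjP_iff v j).2 hj1, fun hc => hj2 ((domF_eq h j).1 hc)⟩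

def undF (h : List (Fin n)) : Finset (Fin n) := Finset.univ \ domF h

lemma mem_undF {h : List (Fin n)} {j : Fin n} : j ∈ undF h ↔ j ∉ domF h := by
  simp [undF]

lemma domF_cons (v : Fin n) (h : List (Fin n)) :
    domF (v :: h) = domF h ∪ nbF v := by
  ext j
  simp only [mem_domF, List.mem_cons, mem_union, mem_nbF]
  constructor
  · rintro ⟨p, hp | hp, hj⟩
    · subst hp; right; rcases hj with h1 | h1; exacts [Or.inl h1, Or.inr h1]
    · exact Or.inl ⟨p, hp, hj⟩
  · rintro (⟨p, hp, hj⟩ | hj)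
    · exact ⟨p, Or.inr hp, hj⟩
    · exact ⟨v, Or.inl rfl, hj⟩

lemma undF_cons (v : Fin n) (h : List (Fin n)) :
    undF (v :: h) = undF h \ nbF v := by
  ext j
  simp only [undF, domF_cons, Finset.mem_sdiff, Finset.mem_univ, true_and, Finset.mem_union]
  tauto

end ZPath
namespace ZPath
open Finset

variable {n : ℕ}

lemma adjP_comm {v j : Fin n} (h : adjP v j) : adjP j v := h.symm

lemma mem_domF_of_mem {p : Fin n} {h : List (Fin n)} (hp : p ∈ h) : p ∈ domF h :=
  mem_domF.2 ⟨p, hp, Or.inl rfl⟩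

lemma nbF_sub_domF {p : Fin n} {h : List (Fin n)} (hp : p ∈ h) : nbF p ⊆ domF h := by
  intro j hj
  exact mem_domF.2 ⟨p, hp, mem_nbF.1 hj⟩

lemma no_legal_of_empty {h : List (Fin n)} (he : undF h = ∅) (v : Fin n) :
    ¬ zLegal (SimpleGraph.pathGraph n) ∅ h v := by
  rw [zLegal_iff]
  rintro ⟨j, _, hj⟩
  have : j ∈ undF h := mem_undF.2 hj
  simp [he] at this

lemma exists_adj (h2 : 2 ≤ n) (v : Fin n) : ∃ j : Fin n, adjP v j := by
  by_cases hv : v.val + 1 < n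
  · exact ⟨⟨v.val + 1, hv⟩, Or.inl rfl⟩
  · refine ⟨⟨v.val - 1, by omega⟩, Or.inr ?_⟩
    have := v.isLt
    simp only []
    omega

lemma legal_exists (h2 : 2 ≤ n) {h : List (Fin n)} (hu : (undF h).Nonempty) :
    ∃ v, zLegal (SimpleGraph.pathGraph n) ∅ h v := by
  obtain ⟨j, hj⟩ := hu
  obtain ⟨v, hv⟩ := exists_adj h2 j
  exact ⟨v, (zLegal_iff h v).2 ⟨j, adjP_comm hv, mem_undF.1 hj⟩⟩

lemma nbF_card (v : Fin n) : (nbF v).card ≤ 3 := by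
  have : (nbF v).card ≤ (Finset.range 3).card := by
    apply Finset.card_le_card_of_injOn (fun j => j.val + 1 - v.val)
    · intro j hj
      have := mem_nbF.1 hj
      simp only [Finset.mem_coe, Finset.mem_range]
      rcases this with h1 | h1 | h1
      · subst h1; omega
      · omega
      · omega
    · intro j hj j' hj' he
      have h1 := mem_nbF.1 hj
      have h1' := mem_nbF.1 hj'
      apply Fin.ext
      simp only at he
      rcases h1 with h | h | h <;> rcases h1' with h' | h' | h' <;>
        first
          | (subst h; subst h'; rfl)
          | (simp_all; omega)
          | omega
  simpa using this

lemma und_card_cons (v : Fin n) (h : List (Fin n)) :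
    (undF h).card ≤ (undF (v :: h)).card + 3 := by
  have hsub : undF h ⊆ undF (v :: h) ∪ nbF v := by
    intro j hj
    rw [undF_cons]
    by_cases hv : j ∈ nbF v
    · exact Finset.mem_union_right _ hv
    · exact Finset.mem_union_left _ (Finset.mem_sdiff.2 ⟨hj, hv⟩)
  calc (undF h).card ≤ (undF (v :: h) ∪ nbF v).card := Finset.card_le_card hsub
    _ ≤ (undF (v :: h)).card + (nbF v).card := Finset.card_union_le _ _
    _ ≤ (undF (v :: h)).card + 3 := by have := nbF_card v; omega

lemma und_card_cons_eq {v : Fin n} {h : List (Fin n)} {j : Fin n}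
    (hj : undF h ∩ nbF v = {j}) :
    (undF (v :: h)).card + 1 = (undF h).card := by
  have hju : j ∈ undF h := by
    have : j ∈ undF h ∩ nbF v := by rw [hj]; exact Finset.mem_singleton_self j
    exact (Finset.mem_inter.1 this).1
  have : undF (v :: h) = undF h \ {j} := by
    rw [undF_cons]
    ext x
    simp only [Finset.mem_sdiff, Finset.mem_singleton]
    constructor
    · rintro ⟨hx, hxn⟩
      refine ⟨hx, fun hxe => ?_⟩
      subst hxe
      have : x ∈ undF h ∩ nbF v := by rw [hj]; exact Finset.mem_singleton_self x
      exact hxn (Finset.mem_inter.1 this).2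
    · rintro ⟨hx, hxn⟩
      refine ⟨hx, fun hc => ?_⟩
      have : x ∈ undF h ∩ nbF v := Finset.mem_inter.2 ⟨hx, hc⟩
      rw [hj] at this
      exact hxn (Finset.mem_singleton.1 this)
  rw [this, Finset.card_sdiff_of_subset (by simpa using hju)]
  simp
  have : 0 < (undF h).card := Finset.card_pos.2 ⟨j, hju⟩
  omega

end ZPath
namespace ZPath
open Finset

variable {n : ℕ}

lemma staller_move (h2 : 2 ≤ n) {h : List (Fin n)} (hd : (domF h).Nonempty)
    (hu : (undF h).Nonempty) :
    ∃ v, zLegal (SimpleGraph.pathGraph n) ∅ h v ∧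
      (undF (v :: h)).card + 1 = (undF h).card := by
  classical
  set c := (domF h).min' hd with hc_def
  have hcmem : c ∈ domF h := Finset.min'_mem _ _
  by_cases hc0 : c.val = 0
  · -- use a = min of undF
    set a := (undF h).min' hu with ha_def
    have ha : a ∈ undF h := Finset.min'_mem _ _
    have hand : a ∉ domF h := mem_undF.1 ha
    have hbelow : ∀ j : Fin n, j.val < a.val → j ∈ domF h := by
      intro j hj
      by_contra hnd
      have : a ≤ j := Finset.min'_le _ _ (mem_undF.2 hnd)
      rw [Fin.le_def] at this
      omega
    have ha0 : a.val ≠ 0 := by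
      intro h0
      have : a = c := Fin.val_injective (by omega)
      rw [this] at hand; exact hand hcmem
    have ha1 : a.val ≠ 1 := by
      intro h1
      have hpd : (⟨0, by omega⟩ : Fin n) ∈ domF h := hbelow _ (by simpa using by omega)
      obtain ⟨p, hp, hcase⟩ := mem_domF.1 hpd
      rcases hcase with he | he | he
      · -- p = ⟨0⟩, so a ∈ nbF p
        have : a ∈ nbF p := mem_nbF.2 (Or.inr (Or.inl (by rw [← he]; simpa using by omega)))
        exact hand (nbF_sub_domF hp this)
      · exact absurd (show p.val + 1 = 0 from he) (by omega)
      · -- p.val = 1 = a.val, p = a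
        have : p = a := Fin.val_injective (by have h' : (0:ℕ) + 1 = p.val := he; omega)
        subst this
        exact hand (mem_domF_of_mem hp)
    have ha2 : 2 ≤ a.val := by omega
    have haval : a.val < n := a.isLt
    set ap : Fin n := ⟨a.val - 1, by omega⟩ with hap_def
    have hapd : ap ∈ domF h := hbelow _ (by simp [hap_def]; omega)
    obtain ⟨p, hp, hcase⟩ := mem_domF.1 hapd
    have hpval : p.val = a.val - 2 := by
      rcases hcase with he | he | he
      · -- ap = p : a ∈ nbF p, contra
        exfalso
        have : a ∈ nbF p := mem_nbF.2 (Or.inr (Or.inl (by rw [← he]; simp [hap_def]; omega)))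
        exact hand (nbF_sub_domF hp this)
      · simp [hap_def] at he; omega
      · -- ap.val + 1 = p.val : p = a, contra
        exfalso
        have : p = a := Fin.val_injective (by simp [hap_def] at he ⊢; omega)
        subst this
        exact hand (mem_domF_of_mem hp)
    have hpd : p ∈ domF h := mem_domF_of_mem hp
    have hsing : undF h ∩ nbF ap = {a} := by
      ext x
      simp only [Finset.mem_inter, Finset.mem_singleton, mem_nbF]
      constructor
      · rintro ⟨hx, he | he | he⟩
        · exfalso; rw [he] at hx; exact (mem_undF.1 hx) hapd
        · -- ap.val + 1 = x.val, x = a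
          apply Fin.val_injective; simp [hap_def] at he; omega
        · -- x.val + 1 = ap.val : x = p
          exfalso
          have : x = p := Fin.val_injective (by simp [hap_def] at he; omega)
          rw [this] at hx; exact (mem_undF.1 hx) hpd
      · intro he
        subst he
        exact ⟨ha, Or.inr (Or.inl (by simp [hap_def]; omega))⟩
    refine ⟨ap, ?_, und_card_cons_eq hsing⟩
    exact (zLegal_iff h ap).2 ⟨a, Or.inl (by simp [hap_def]; omega), hand⟩
  · -- c.val ≥ 1 : play c
    have hcval : c.val < n := c.isLt
    set cp : Fin n := ⟨c.val - 1, by omega⟩ with hcp_def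
    have hcpnd : cp ∉ domF h := by
      intro hmem
      have : c ≤ cp := Finset.min'_le _ _ hmem
      rw [Fin.le_def] at this
      simp [hcp_def] at this
      omega
    obtain ⟨p, hp, hcase⟩ := mem_domF.1 hcmem
    have hpval : p.val = c.val + 1 := by
      rcases hcase with he | he | he
      · -- c = p : cp ∈ nbF p, contra
        exfalso
        exact hcpnd (nbF_sub_domF hp (mem_nbF.2 (Or.inr (Or.inr (by rw [← he]; simp [hcp_def]; omega)))))
      · -- p.val + 1 = c.val : p below min of domF
        exfalso
        have : c ≤ p := Finset.min'_le _ _ (mem_domF_of_mem hp)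
        rw [Fin.le_def] at this
        omega
      · omega
    have hpd : p ∈ domF h := mem_domF_of_mem hp
    have hsing : undF h ∩ nbF c = {cp} := by
      ext x
      simp only [Finset.mem_inter, Finset.mem_singleton, mem_nbF]
      constructor
      · rintro ⟨hx, he | he | he⟩
        · exfalso; rw [he] at hx; exact (mem_undF.1 hx) hcmem
        · exfalso
          have : x = p := Fin.val_injective (by omega)
          rw [this] at hx; exact (mem_undF.1 hx) hpd
        · apply Fin.val_injective; simp [hcp_def]; omega
      · intro he
        subst he
        exact ⟨mem_undF.2 hcpnd, Or.inr (Or.inr (by simp [hcp_def]; omega))⟩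
    refine ⟨c, ?_, und_card_cons_eq hsing⟩
    exact (zLegal_iff h c).2 ⟨cp, Or.inr (by simp [hcp_def]; omega), hcpnd⟩

end ZPath
namespace ZPath
open Finset

variable {n : ℕ}

lemma domF_nil : domF ([] : List (Fin n)) = ∅ := by
  ext j; simp [mem_domF]

lemma undF_nil : undF ([] : List (Fin n)) = Finset.univ := by
  simp [undF, domF_nil]

lemma lb (h2 : 2 ≤ n) : ∀ k (h : List (Fin n)),
    canEnd (zLegal (SimpleGraph.pathGraph n) ∅) k true h → (undF h).card ≤ 2 * k + 2 := by
  intro k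
  induction k using Nat.strong_induction_on with
  | _ k IH =>
    intro h hc
    by_cases hu : undF h = ∅
    · simp [hu]
    · have hune : (undF h).Nonempty := Finset.nonempty_iff_ne_empty.2 hu
      cases k with
      | zero =>
        exfalso
        obtain ⟨v, hv⟩ := legal_exists h2 hune
        exact hc v hv
      | succ k' =>
        rcases hc with hno | ⟨v, hv, hcan⟩
        · exfalso
          obtain ⟨w, hw⟩ := legal_exists h2 hune
          exact hno w hw
        · by_cases hu1 : undF (v :: h) = ∅
          · have h3 := und_card_cons v h
            rw [hu1] at h3
            simp at h3
            omega
          · have hune1 : (undF (v :: h)).Nonempty := Finset.nonempty_iff_ne_empty.2 hu1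
            have hd1 : (domF (v :: h)).Nonempty :=
              ⟨v, mem_domF_of_mem List.mem_cons_self⟩
            obtain ⟨w, hwl, hwcard⟩ := staller_move h2 hd1 hune1
            cases k' with
            | zero => exact absurd hwl (hcan w)
            | succ k'' =>
              have hIH := IH k'' (by omega) (w :: v :: h) (hcan w hwl)
              have h3 := und_card_cons v h
              omega

end ZPath
namespace ZPath
open Finset

variable {n : ℕ}

/-- left endpoints of undominated fragments -/
def leF (h : List (Fin n)) : Finset (Fin n) :=
  (undF h).filter (fun j => ∀ i : Fin n, i.val + 1 = j.val → i ∈ domF h)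

/-- the potential function -/
def phi (h : List (Fin n)) : ℕ := (undF h).card + (leF h).card

/-- all undominated vertices are isolated -/
def SingP (h : List (Fin n)) : Prop :=
  ∀ j ∈ undF h, ∀ i : Fin n, adjP j i → i ∈ domF h

lemma mem_leF {h : List (Fin n)} {j : Fin n} :
    j ∈ leF h ↔ j ∈ undF h ∧ ∀ i : Fin n, i.val + 1 = j.val → i ∈ domF h := by
  simp [leF]

lemma und_card_cons_sub (v : Fin n) (h : List (Fin n)) :
    (undF (v :: h)).card + (undF h ∩ nbF v).card = (undF h).card := by
  rw [undF_cons]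
  exact Finset.card_sdiff_add_card_inter _ _

lemma mem_und_cons {v j : Fin n} {h : List (Fin n)} :
    j ∈ undF (v :: h) ↔ j ∈ undF h ∧ j ∉ nbF v := by
  rw [undF_cons]; exact Finset.mem_sdiff

lemma new_endpoint {v j : Fin n} {h : List (Fin n)}
    (hj : j ∈ leF (v :: h)) (hjn : j ∉ leF h) :
    ∃ i : Fin n, i.val = v.val + 1 ∧ j.val = v.val + 2 ∧ i ∈ undF h := by
  obtain ⟨hju', hjp⟩ := mem_leF.1 hj
  obtain ⟨hju, hjnb⟩ := mem_und_cons.1 hju'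
  have hold : ¬ ∀ i : Fin n, i.val + 1 = j.val → i ∈ domF h := by
    intro hc
    exact hjn (mem_leF.2 ⟨hju, hc⟩)
  push_neg at hold
  obtain ⟨i, hi1, hi2⟩ := hold
  have hi3 : i ∈ domF (v :: h) := hjp i hi1
  have hi4 : i ∈ nbF v := by
    rw [domF_cons] at hi3
    rcases Finset.mem_union.1 hi3 with hx | hx
    · exact absurd hx hi2
    · exact hx
  rcases mem_nbF.1 hi4 with he | he | he
  · exfalso
    subst he
    exact hjnb (mem_nbF.2 (Or.inr (Or.inl hi1)))
  · exact ⟨i, he.symm, by omega, mem_undF.2 hi2⟩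
  · exfalso
    have : j = v := Fin.val_injective (by omega)
    subst this
    exact hjnb (mem_nbF.2 (Or.inl rfl))

lemma leF_cons_sub (v : Fin n) (h : List (Fin n)) :
    leF (v :: h) ⊆ (leF h ∩ undF (v :: h)) ∪
      ((undF (v :: h)).filter (fun j => (j.val : ℕ) = v.val + 2)) := by
  intro j hj
  by_cases hjn : j ∈ leF h
  · exact Finset.mem_union_left _ (Finset.mem_inter.2 ⟨hjn, (mem_leF.1 hj).1⟩)
  · obtain ⟨i, _, hj2, _⟩ := new_endpoint hj hjn
    exact Finset.mem_union_right _ (Finset.mem_filter.2 ⟨(mem_leF.1 hj).1, hj2⟩)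

lemma card_val_filter (m : ℕ) (s : Finset (Fin n)) :
    (s.filter (fun j => (j.val : ℕ) = m)).card ≤ 1 := by
  apply Finset.card_le_one.2
  intro a ha b hb
  have h1 := (Finset.mem_filter.1 ha).2
  have h2 := (Finset.mem_filter.1 hb).2
  exact Fin.val_injective (by omega)

/-- generic bound on the new number of left endpoints -/
lemma leF_cons_card (v : Fin n) (h : List (Fin n)) :
    (leF (v :: h)).card ≤ (leF h ∩ undF (v :: h)).card + 1 := by
  calc (leF (v :: h)).card
      ≤ ((leF h ∩ undF (v :: h)) ∪
          ((undF (v :: h)).filter (fun j => (j.val : ℕ) = v.val + 2))).card :=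
        Finset.card_le_card (leF_cons_sub v h)
    _ ≤ (leF h ∩ undF (v :: h)).card +
          ((undF (v :: h)).filter (fun j => (j.val : ℕ) = v.val + 2)).card :=
        Finset.card_union_le _ _
    _ ≤ _ := by have := card_val_filter (v.val + 2) (undF (v :: h)); omega

lemma inter_card_lt {v i : Fin n} {h : List (Fin n)} (hi : i ∈ leF h)
    (hi' : i ∉ undF (v :: h)) :
    (leF h ∩ undF (v :: h)).card + 1 ≤ (leF h).card := by
  have hsub : insert i (leF h ∩ undF (v :: h)) ⊆ leF h := by
    intro x hx
    rcases Finset.mem_insert.1 hx with he | hx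
    · subst he; exact hi
    · exact (Finset.mem_inter.1 hx).1
  have hnm : i ∉ leF h ∩ undF (v :: h) := fun hc => hi' (Finset.mem_inter.1 hc).2
  calc (leF h ∩ undF (v :: h)).card + 1
      = (insert i (leF h ∩ undF (v :: h))).card := (Finset.card_insert_of_notMem hnm).symm
    _ ≤ (leF h).card := Finset.card_le_card hsub

lemma staller_phi {h : List (Fin n)} {v : Fin n}
    (hv : zLegal (SimpleGraph.pathGraph n) ∅ h v) :
    phi (v :: h) + 1 ≤ phi h := by
  obtain ⟨j0, hj0a, hj0d⟩ := (zLegal_iff h v).1 hv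
  have hj0mem : j0 ∈ undF h ∩ nbF v :=
    Finset.mem_inter.2 ⟨mem_undF.2 hj0d, mem_nbF.2 (Or.inr hj0a)⟩
  have hi1 : 1 ≤ (undF h ∩ nbF v).card := Finset.card_pos.2 ⟨j0, hj0mem⟩
  have hu := und_card_cons_sub v h
  by_cases hnew : ∃ j ∈ leF (v :: h), j ∉ leF h
  · obtain ⟨j1, hj1, hj1n⟩ := hnew
    obtain ⟨i, hiv, hj1v, hiund⟩ := new_endpoint hj1 hj1n
    have hinb : i ∈ nbF v := mem_nbF.2 (Or.inr (Or.inl hiv.symm))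
    have hiu' : i ∉ undF (v :: h) := by
      intro hc
      exact (mem_und_cons.1 hc).2 hinb
    by_cases hvd : v ∈ domF h
    · -- i is an old left endpoint that disappears
      have hiLE : i ∈ leF h := by
        refine mem_leF.2 ⟨hiund, fun i2 hi2 => ?_⟩
        have : i2 = v := Fin.val_injective (by omega)
        subst this; exact hvd
      have hf := leF_cons_card v h
      have hf2 := inter_card_lt hiLE hiu'
      unfold phi
      omega
    · -- v itself is also newly dominated
      have hvmem : v ∈ undF h ∩ nbF v :=
        Finset.mem_inter.2 ⟨mem_undF.2 hvd, mem_nbF.2 (Or.inl rfl)⟩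
      have himem : i ∈ undF h ∩ nbF v := Finset.mem_inter.2 ⟨hiund, hinb⟩
      have hne : i ≠ v := Fin.ne_of_val_ne (by omega)
      have h2 : 2 ≤ (undF h ∩ nbF v).card := by
        have hsub : insert i {v} ⊆ undF h ∩ nbF v := by
          intro x hx
          rcases Finset.mem_insert.1 hx with he | hx
          · subst he; exact himem
          · rw [Finset.mem_singleton.1 hx]; exact hvmem
        have : (insert i ({v} : Finset (Fin n))).card = 2 := by
          rw [Finset.card_insert_of_notMem (by simpa using hne)]
          simp
        calc 2 = (insert i ({v} : Finset (Fin n))).card := this.symm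
          _ ≤ _ := Finset.card_le_card hsub
      have hf := leF_cons_card v h
      have hf2 : (leF h ∩ undF (v :: h)).card ≤ (leF h).card :=
        Finset.card_le_card (Finset.inter_subset_left)
      unfold phi
      omega
  · push_neg at hnew
    have hf : (leF (v :: h)).card ≤ (leF h).card :=
      Finset.card_le_card (fun x hx => hnew x hx)
    unfold phi
    omega

lemma leF_eq_of_sing {h : List (Fin n)} (hs : SingP h) : leF h = undF h := by
  apply Finset.Subset.antisymm (Finset.filter_subset _ _)
  intro j hj
  exact mem_leF.2 ⟨hj, fun i hi => hs j hj i (Or.inr hi)⟩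

lemma sing_cons {h : List (Fin n)} (hs : SingP h) (v : Fin n) : SingP (v :: h) := by
  intro j hj i hi
  rw [domF_cons]
  exact Finset.mem_union_left _ (hs j (mem_und_cons.1 hj).1 i hi)

lemma sing_move {h : List (Fin n)} (hs : SingP h) {v : Fin n}
    (hv : zLegal (SimpleGraph.pathGraph n) ∅ h v) :
    ∃ j, undF h ∩ nbF v = {j} := by
  obtain ⟨j, hja, hjd⟩ := (zLegal_iff h v).1 hv
  have hju : j ∈ undF h := mem_undF.2 hjd
  have hvd : v ∈ domF h := hs j hju v (adjP_comm hja)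
  -- v has a dominated neighbor i
  obtain ⟨p, hp, hcase⟩ := mem_domF.1 hvd
  have hvp : v ≠ p := by
    intro he
    subst he
    exact hjd (nbF_sub_domF hp (mem_nbF.2 (Or.inr hja)))
  have hpa : adjP v p := by
    rcases hcase with he | he
    · exact absurd he hvp
    · exact adjP_comm he
  have hpd : p ∈ domF h := mem_domF_of_mem hp
  refine ⟨j, ?_⟩
  ext x
  simp only [Finset.mem_inter, Finset.mem_singleton, mem_nbF]
  constructor
  · rintro ⟨hx, he | hxa⟩
    · exfalso; rw [he] at hx; exact (mem_undF.1 hx) hvd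
    · -- x adjacent to v, x undominated: x = j
      by_contra hxj
      have hxd := mem_undF.1 hx
      rcases hxa with h1 | h1 <;> rcases hja with h2 | h2
      · exact hxj (Fin.val_injective (by omega))
      · -- x on + side, j on - side; p must coincide with one of them
        rcases hpa with h3 | h3
        · have : p = x := Fin.val_injective (by omega)
          subst this; exact hxd hpd
        · have : p = j := Fin.val_injective (by omega)
          subst this; exact hjd hpd
      · rcases hpa with h3 | h3
        · have : p = j := Fin.val_injective (by omega)
          subst this; exact hjd hpd
        · have : p = x := Fin.val_injective (by omega)
          subst this; exact hxd hpd
      · exact hxj (Fin.val_injective (by omega))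
  · intro he
    subst he
    exact ⟨hju, Or.inr hja⟩

lemma sing_phi {h : List (Fin n)} (hs : SingP h) : phi h = 2 * (undF h).card := by
  unfold phi
  rw [leF_eq_of_sing hs]
  omega

end ZPath
namespace ZPath
open Finset

variable {n : ℕ}

lemma not_sing {h : List (Fin n)} (hns : ¬ SingP h) :
    ∃ a : Fin n, a.val + 1 < n ∧ a ∈ undF h ∧
      ∀ b : Fin n, b.val = a.val + 1 → b ∈ undF h := by
  unfold SingP at hns
  push_neg at hns
  obtain ⟨j, hj, i, hia, hid⟩ := hns
  have hiu : i ∈ undF h := mem_undF.2 hid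
  rcases hia with h1 | h1
  · refine ⟨j, by omega, hj, fun b hb => ?_⟩
    have : b = i := Fin.val_injective (by omega)
    subst this; exact hiu
  · refine ⟨i, by omega, hiu, fun b hb => ?_⟩
    have : b = j := Fin.val_injective (by omega)
    subst this; exact hj

lemma dom_move {h : List (Fin n)} (hns : ¬ SingP h) :
    ∃ v, zLegal (SimpleGraph.pathGraph n) ∅ h v ∧ phi (v :: h) + 3 ≤ phi h := by
  classical
  obtain ⟨a0, ha01, ha02, ha03⟩ := not_sing hns
  set C : Finset (Fin n) := Finset.univ.filter (fun a : Fin n =>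
    a.val + 1 < n ∧ a ∈ undF h ∧ ∀ b : Fin n, b.val = a.val + 1 → b ∈ undF h) with hC
  have hCne : C.Nonempty := ⟨a0, by
    refine Finset.mem_filter.2 ⟨Finset.mem_univ _, ha01, ha02, ha03⟩⟩
  set a := C.min' hCne with ha_def
  have haC : a ∈ C := Finset.min'_mem _ _
  obtain ⟨ha1, ha2, ha3⟩ := (Finset.mem_filter.1 haC).2
  set b : Fin n := ⟨a.val + 1, ha1⟩ with hb_def
  have hbu : b ∈ undF h := ha3 b rfl
  have haL : ∀ i : Fin n, i.val + 1 = a.val → i ∈ domF h := by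
    intro i hi
    by_contra hnd
    have hiC : i ∈ C := by
      refine Finset.mem_filter.2 ⟨Finset.mem_univ _, by omega, mem_undF.2 hnd,
        fun b2 hb2 => ?_⟩
      have : b2 = a := Fin.val_injective (by omega)
      subst this; exact ha2
    have := Finset.min'_le _ _ hiC
    rw [Fin.le_def] at this
    omega
  have haLE : a ∈ leF h := mem_leF.2 ⟨ha2, haL⟩
  have habv : a.val + 1 = b.val := rfl
  by_cases hnext : ∀ j : Fin n, j.val = a.val + 2 → j ∈ domF h
  · -- play a : dominates {a, b}, no new endpoint can appear
    refine ⟨a, (zLegal_iff h a).2 ⟨b, Or.inl habv, mem_undF.1 hbu⟩, ?_⟩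
    have hau' : a ∉ undF (a :: h) := fun hc =>
      (mem_und_cons.1 hc).2 (mem_nbF.2 (Or.inl rfl))
    have hsub2 : insert a ({b} : Finset (Fin n)) ⊆ undF h ∩ nbF a := by
      intro x hx
      rcases Finset.mem_insert.1 hx with he | hx
      · subst he; exact Finset.mem_inter.2 ⟨ha2, mem_nbF.2 (Or.inl rfl)⟩
      · rw [Finset.mem_singleton.1 hx]
        exact Finset.mem_inter.2 ⟨hbu, mem_nbF.2 (Or.inr (Or.inl habv))⟩
    have hab : a ≠ b := Fin.ne_of_val_ne (by omega)
    have hcard2 : (insert a ({b} : Finset (Fin n))).card = 2 := by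
      rw [Finset.card_insert_of_notMem (by simpa using hab)]
      simp
    have h2le : 2 ≤ (undF h ∩ nbF a).card :=
      hcard2 ▸ Finset.card_le_card hsub2
    have hfsub : leF (a :: h) ⊆ leF h ∩ undF (a :: h) := by
      intro x hx
      rcases Finset.mem_union.1 (leF_cons_sub a h hx) with hx1 | hx1
      · exact hx1
      · exfalso
        obtain ⟨hx2, hx3⟩ := Finset.mem_filter.1 hx1
        exact (mem_undF.1 (mem_und_cons.1 hx2).1) (hnext x hx3)
    have hf : (leF (a :: h)).card ≤ (leF h ∩ undF (a :: h)).card :=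
      Finset.card_le_card hfsub
    have hf2 := inter_card_lt haLE hau'
    have hu := und_card_cons_sub a h
    unfold phi
    omega
  · -- play b : dominates {a, b, c}
    push_neg at hnext
    obtain ⟨c, hcval, hcnd⟩ := hnext
    have hcu : c ∈ undF h := mem_undF.2 hcnd
    refine ⟨b, (zLegal_iff h b).2 ⟨a, Or.inr habv, mem_undF.1 ha2⟩, ?_⟩
    have hau' : a ∉ undF (b :: h) := fun hc =>
      (mem_und_cons.1 hc).2 (mem_nbF.2 (Or.inr (Or.inr habv)))
    have hbcv : b.val + 1 = c.val := by omega
    have hsub3 : insert a (insert b ({c} : Finset (Fin n))) ⊆ undF h ∩ nbF b := by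
      intro x hx
      rcases Finset.mem_insert.1 hx with he | hx
      · subst he; exact Finset.mem_inter.2 ⟨ha2, mem_nbF.2 (Or.inr (Or.inr habv))⟩
      · rcases Finset.mem_insert.1 hx with he | hx
        · subst he; exact Finset.mem_inter.2 ⟨hbu, mem_nbF.2 (Or.inl rfl)⟩
        · rw [Finset.mem_singleton.1 hx]
          exact Finset.mem_inter.2 ⟨hcu, mem_nbF.2 (Or.inr (Or.inl hbcv))⟩
    have hcard3 : (insert a (insert b ({c} : Finset (Fin n)))).card = 3 := by
      rw [Finset.card_insert_of_notMem, Finset.card_insert_of_notMem, Finset.card_singleton]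
      · simpa using Fin.ne_of_val_ne (show b.val ≠ c.val by omega)
      · simp only [Finset.mem_insert, Finset.mem_singleton]
        push_neg
        exact ⟨Fin.ne_of_val_ne (by omega), Fin.ne_of_val_ne (by omega)⟩
    have h3le : 3 ≤ (undF h ∩ nbF b).card :=
      hcard3 ▸ Finset.card_le_card hsub3
    have hf := leF_cons_card b h
    have hf2 := inter_card_lt haLE hau'
    have hu := und_card_cons_sub b h
    unfold phi
    omega

end ZPath
namespace ZPath
open Finset

variable {n : ℕ}

lemma ub (h2 : 2 ≤ n) : ∀ k : ℕ,
    (∀ h : List (Fin n), phi h ≤ 2 * k →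
      canEnd (zLegal (SimpleGraph.pathGraph n) ∅) k true h) ∧
    (∀ h : List (Fin n), (phi h + 1 ≤ 2 * k ∨ (SingP h ∧ phi h ≤ 2 * k)) →
      canEnd (zLegal (SimpleGraph.pathGraph n) ∅) k false h) := by
  intro k
  induction k with
  | zero =>
    have base : ∀ h : List (Fin n), phi h ≤ 0 →
        ∀ v, ¬ zLegal (SimpleGraph.pathGraph n) ∅ h v := by
      intro h hp v
      have : (undF h).card = 0 := by unfold phi at hp; omega
      exact no_legal_of_empty (Finset.card_eq_zero.1 this) v
    constructor
    · intro h hp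
      exact base h (by omega)
    · intro h hp
      rcases hp with hp | ⟨hs, hp⟩
      · omega
      · exact base h (by omega)
  | succ k IH =>
    obtain ⟨IT, IF⟩ := IH
    constructor
    · intro h hp
      by_cases hu : undF h = ∅
      · exact Or.inl (fun v => no_legal_of_empty hu v)
      · have hune := Finset.nonempty_iff_ne_empty.2 hu
        by_cases hs : SingP h
        · obtain ⟨v, hv⟩ := legal_exists h2 hune
          obtain ⟨j, hj⟩ := sing_move hs hv
          have hcard := und_card_cons_eq hj
          refine Or.inr ⟨v, hv, IF _ (Or.inr ⟨sing_cons hs v, ?_⟩)⟩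
          rw [sing_phi (sing_cons hs v)]
          rw [sing_phi hs] at hp
          omega
        · obtain ⟨v, hv, hd⟩ := dom_move hs
          exact Or.inr ⟨v, hv, IF _ (Or.inl (by omega))⟩
    · intro h hp v hv
      apply IT
      rcases hp with hp | ⟨hs, hp⟩
      · have := staller_phi hv
        omega
      · obtain ⟨j, hj⟩ := sing_move hs hv
        have hcard := und_card_cons_eq hj
        rw [sing_phi (sing_cons hs v)]
        rw [sing_phi hs] at hp
        omega

lemma leF_nil (hn : 0 < n) : leF ([] : List (Fin n)) = {(⟨0, hn⟩ : Fin n)} := by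
  ext j
  rw [Finset.mem_singleton, mem_leF]
  constructor
  · rintro ⟨-, hj⟩
    by_contra hne
    have hj0 : j.val ≠ 0 := fun h0 => hne (Fin.val_injective h0)
    have hmem := hj ⟨j.val - 1, by omega⟩ (show j.val - 1 + 1 = j.val by omega)
    rw [domF_nil] at hmem
    simp at hmem
  · intro he
    subst he
    refine ⟨by rw [undF_nil]; exact Finset.mem_univ _, fun i hi => ?_⟩
    have h0 : (⟨0, hn⟩ : Fin n).val = 0 := rfl
    omega

lemma phi_nil (hn : 0 < n) : phi ([] : List (Fin n)) = n + 1 := by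
  unfold phi
  rw [undF_nil, leF_nil hn]
  simp [Finset.card_univ]

end ZPath
/-- `γ_Zg(P_n) = n/2 + c_n` with `|c_n| ≤ 2`. -/
theorem gammaZg_path (n : ℕ) (hn : 0 < n) :
    |(gammaZg (SimpleGraph.pathGraph n) : ℝ) - n / 2| ≤ 2 := by
  by_cases h1 : n = 1
  · subst h1
    have h0 : canEnd (zLegal (SimpleGraph.pathGraph 1) ∅) 0 true [] := by
      intro v hv
      obtain ⟨j, hj, -⟩ := (ZPath.zLegal_iff [] v).1 hv
      have hv1 := v.isLt
      have hj1 := j.isLt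
      rcases hj with hj | hj <;> omega
    have hg : gammaZg (SimpleGraph.pathGraph 1) = 0 := by
      have : (0 : ℕ) ∈ {k | canEnd (zLegal (SimpleGraph.pathGraph 1) ∅) k true []} := h0
      exact Nat.sInf_eq_zero.2 (Or.inl this)
    rw [hg, abs_le]
    norm_num
  · have h2 : 2 ≤ n := by omega
    set S := {k | canEnd (zLegal (SimpleGraph.pathGraph n) ∅) k true ([] : List (Fin n))}
      with hS
    have hub : (n + 2) / 2 ∈ S := by
      apply (ZPath.ub h2 ((n + 2) / 2)).1
      rw [ZPath.phi_nil (by omega)]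
      omega
    have hSne : S.Nonempty := ⟨_, hub⟩
    have hγ : gammaZg (SimpleGraph.pathGraph n) = sInf S := rfl
    have hmem : sInf S ∈ S := Nat.sInf_mem hSne
    have hlow : n ≤ 2 * sInf S + 2 := by
      have hlb := ZPath.lb h2 (sInf S) [] hmem
      rw [ZPath.undF_nil] at hlb
      simpa [Finset.card_univ] using hlb
    have hhigh : 2 * sInf S ≤ n + 2 := by
      have := Nat.sInf_le hub
      omega
    rw [hγ, abs_le]
    have hA : (n : ℝ) ≤ 2 * (sInf S) + 2 := by exact_mod_cast hlow
    have hB : (2 * (sInf S) : ℝ) ≤ n + 2 := by exact_mod_cast hhigh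
    constructor <;> [linarith; linarith]
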